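/- Let $r = \frac{1 + \sqrt{7}}{4} + i\,\frac{-1 + \sqrt{7}}{4}$ (note $|r| = 1$). For complex numbers $z_1, z_2, z_3, z_4$, define $D(z_1, z_2, z_3, z_4) = r(|z_3|^2 + |z_4|^2) - i\overline{r}(|z_1|^2 + |z_2|^2) + (z_1\overline{z_3} + z_2\overline{z_4}) - i(\overline{z_1} z_3 + \overline{z_2} z_4)$. Then for all Gaussian integers $z_1, z_2, z_3, z_4$, not all zero, $|D(z_1, z_2, z_3, z_4)|^2 \geq 1/2$; moreover there exist Gaussian integers $z_1, z_2, z_3, z_4$, not all zero, with $|D(z_1, z_2, z_3, z_4)|^2 = 1/2$ (for instance $z_1 = z_4 = 1$, $z_2 = z_3 = 0$). -/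

import Mathlib

open Complex ComplexConjugate

/-- A Gaussian integer: a complex number whose real and imaginary parts are integers. -/
def IsGaussianInt (z : ℂ) : Prop := ∃ a b : ℤ, z = (a : ℂ) + (b : ℂ) * Complex.I

/-- The optimized design coefficient `r = (1+√7)/4 + i(-1+√7)/4`. -/
noncomputable def rOpt : ℂ :=
  (((1 + Real.sqrt 7) / 4 : ℝ) : ℂ) + (((-1 + Real.sqrt 7) / 4 : ℝ) : ℂ) * Complex.I

/-- Determinant of the codeword difference matrix of the code `X` with design coefficient `rOpt`. -/
noncomputable def Ddet (z₁ z₂ z₃ z₄ : ℂ) : ℂ :=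
  rOpt * ((Complex.normSq z₃ : ℂ) + (Complex.normSq z₄ : ℂ)) -
    Complex.I * conj rOpt * ((Complex.normSq z₁ : ℂ) + (Complex.normSq z₂ : ℂ)) +
    (z₁ * conj z₃ + z₂ * conj z₄) -
    Complex.I * (conj z₁ * z₃ + conj z₂ * z₄)

lemma Ddet_re (a1 b1 a2 b2 a3 b3 a4 b4 : ℝ) :
    (Ddet (a1 + b1*Complex.I) (a2 + b2*Complex.I) (a3 + b3*Complex.I) (a4 + b4*Complex.I)).re
    = ((a3^2+b3^2+a4^2+b4^2) + (a1^2+b1^2+a2^2+b2^2))/4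
      + ((a1*a3+b1*b3-b1*a3+a1*b3)+(a2*a4+b2*b4-b2*a4+a2*b4))
      + Real.sqrt 7 * ((a3^2+b3^2+a4^2+b4^2) - (a1^2+b1^2+a2^2+b2^2))/4 := by
  simp only [Ddet, rOpt, Complex.normSq_add_mul_I, map_add, map_mul,
    Complex.conj_I, Complex.conj_ofReal]
  simp only [Complex.add_re, Complex.add_im, Complex.sub_re, Complex.sub_im,
    Complex.mul_re, Complex.mul_im, Complex.neg_re, Complex.neg_im,
    Complex.I_re, Complex.I_im, Complex.ofReal_re, Complex.ofReal_im,
    mul_zero, zero_mul, mul_one, one_mul, sub_zero, zero_sub, add_zero, zero_add, neg_zero, neg_neg]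
  ring

lemma Ddet_im (a1 b1 a2 b2 a3 b3 a4 b4 : ℝ) :
    (Ddet (a1 + b1*Complex.I) (a2 + b2*Complex.I) (a3 + b3*Complex.I) (a4 + b4*Complex.I)).im
    = Real.sqrt 7 * ((a3^2+b3^2+a4^2+b4^2) - (a1^2+b1^2+a2^2+b2^2))/4
      - ((a3^2+b3^2+a4^2+b4^2) + (a1^2+b1^2+a2^2+b2^2))/4
      - ((a1*a3+b1*b3-b1*a3+a1*b3)+(a2*a4+b2*b4-b2*a4+a2*b4)) := by
  simp only [Ddet, rOpt, Complex.normSq_add_mul_I, map_add, map_mul,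
    Complex.conj_I, Complex.conj_ofReal]
  simp only [Complex.add_re, Complex.add_im, Complex.sub_re, Complex.sub_im,
    Complex.mul_re, Complex.mul_im, Complex.neg_re, Complex.neg_im,
    Complex.I_re, Complex.I_im, Complex.ofReal_re, Complex.ofReal_im,
    mul_zero, zero_mul, mul_one, one_mul, sub_zero, zero_sub, add_zero, zero_add, neg_zero, neg_neg]
  ring

lemma normSq_Ddet (a1 b1 a2 b2 a3 b3 a4 b4 : ℝ) :
    Complex.normSq (Ddet (a1 + b1*Complex.I) (a2 + b2*Complex.I) (a3 + b3*Complex.I) (a4 + b4*Complex.I))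
      = (7*((a3^2+b3^2+a4^2+b4^2) - (a1^2+b1^2+a2^2+b2^2))^2
         + ((a3^2+b3^2+a4^2+b4^2) + (a1^2+b1^2+a2^2+b2^2)
            + 4*((a1*a3+b1*b3-b1*a3+a1*b3)+(a2*a4+b2*b4-b2*a4+a2*b4)))^2)/8 := by
  have h7 : Real.sqrt 7 ^ 2 = 7 := Real.sq_sqrt (by norm_num)
  rw [Complex.normSq_apply, Ddet_re, Ddet_im]
  linear_combination (((a3^2+b3^2+a4^2+b4^2) - (a1^2+b1^2+a2^2+b2^2))^2/8) * h7

set_option maxHeartbeats 4000000 in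
lemma zmod4_key : ∀ x1 y1 x2 y2 x3 y3 x4 y4 : ZMod 4,
    x1^2+y1^2+x2^2+y2^2 = x3^2+y3^2+x4^2+y4^2 →
    x3^2+y3^2+x4^2+y4^2 + 2*((x1*x3+y1*y3-y1*x3+x1*y3)+(x2*x4+y2*y4-y2*x4+x2*y4)) = 0 →
    2*(x1+y1) = 0 ∧ 2*(x2+y2) = 0 ∧ 2*(x3+y3) = 0 ∧ 2*(x4+y4) = 0 := by decide

lemma even_of_zmod4 (x y : ℤ) (h : 2*((x:ZMod 4)+(y:ZMod 4)) = 0) : 2 ∣ x + y := by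
  have h4 : ((2*(x+y) : ℤ) : ZMod 4) = 0 := by push_cast; linear_combination h
  have := (ZMod.intCast_zmod_eq_zero_iff_dvd _ 4).1 h4
  omega

lemma descent : ∀ n : ℕ, ∀ x1 y1 x2 y2 x3 y3 x4 y4 : ℤ,
    x1^2+y1^2+x2^2+y2^2 = (n:ℤ) → x3^2+y3^2+x4^2+y4^2 = (n:ℤ) →
    (n:ℤ) + 2*((x1*x3+y1*y3-y1*x3+x1*y3)+(x2*x4+y2*y4-y2*x4+x2*y4)) = 0 →
    x1=0 ∧ y1=0 ∧ x2=0 ∧ y2=0 ∧ x3=0 ∧ y3=0 ∧ x4=0 ∧ y4=0 := by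
  intro n
  induction n using Nat.strong_induction_on with
  | _ n ih =>
    intro x1 y1 x2 y2 x3 y3 x4 y4 h1 h2 h3
    rcases Nat.eq_zero_or_pos n with hn | hn
    · subst hn
      simp only [Nat.cast_zero] at h1 h2
      have n1 := sq_nonneg x1; have n2 := sq_nonneg y1; have n3 := sq_nonneg x2
      have n4 := sq_nonneg y2; have n5 := sq_nonneg x3; have n6 := sq_nonneg y3
      have n7 := sq_nonneg x4; have n8 := sq_nonneg y4
      exact ⟨sq_eq_zero_iff.mp (by linarith), sq_eq_zero_iff.mp (by linarith),
        sq_eq_zero_iff.mp (by linarith), sq_eq_zero_iff.mp (by linarith),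
        sq_eq_zero_iff.mp (by linarith), sq_eq_zero_iff.mp (by linarith),
        sq_eq_zero_iff.mp (by linarith), sq_eq_zero_iff.mp (by linarith)⟩
    · -- transfer to ZMod 4
      have e12 : x1^2+y1^2+x2^2+y2^2 = x3^2+y3^2+x4^2+y4^2 := h1.trans h2.symm
      have hA : (x1:ZMod 4)^2+(y1:ZMod 4)^2+(x2:ZMod 4)^2+(y2:ZMod 4)^2
          = (x3:ZMod 4)^2+(y3:ZMod 4)^2+(x4:ZMod 4)^2+(y4:ZMod 4)^2 := by
        have := congrArg (fun z : ℤ => (z : ZMod 4)) e12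
        push_cast at this; exact this
      have hBz : x3^2+y3^2+x4^2+y4^2
          + 2*((x1*x3+y1*y3-y1*x3+x1*y3)+(x2*x4+y2*y4-y2*x4+x2*y4)) = 0 := by
        rw [h2]; linarith
      have hB : (x3:ZMod 4)^2+(y3:ZMod 4)^2+(x4:ZMod 4)^2+(y4:ZMod 4)^2
          + 2*(((x1:ZMod 4)*(x3:ZMod 4)+(y1:ZMod 4)*(y3:ZMod 4)-(y1:ZMod 4)*(x3:ZMod 4)+(x1:ZMod 4)*(y3:ZMod 4))
            +((x2:ZMod 4)*(x4:ZMod 4)+(y2:ZMod 4)*(y4:ZMod 4)-(y2:ZMod 4)*(x4:ZMod 4)+(x2:ZMod 4)*(y4:ZMod 4))) = 0 := by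
        have := congrArg (fun z : ℤ => (z : ZMod 4)) hBz
        push_cast at this; exact this
      obtain ⟨p1, p2, p3, p4⟩ := zmod4_key _ _ _ _ _ _ _ _ hA hB
      obtain ⟨c1, hc1⟩ : ∃ c, x1 + y1 = 2*c := ⟨(x1+y1)/2, by have := even_of_zmod4 x1 y1 p1; omega⟩
      obtain ⟨c2, hc2⟩ : ∃ c, x2 + y2 = 2*c := ⟨(x2+y2)/2, by have := even_of_zmod4 x2 y2 p2; omega⟩
      obtain ⟨c3, hc3⟩ : ∃ c, x3 + y3 = 2*c := ⟨(x3+y3)/2, by have := even_of_zmod4 x3 y3 p3; omega⟩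
      obtain ⟨c4, hc4⟩ : ∃ c, x4 + y4 = 2*c := ⟨(x4+y4)/2, by have := even_of_zmod4 x4 y4 p4; omega⟩
      set b1 := c1 - x1 with hb1
      set b2 := c2 - x2 with hb2
      set b3 := c3 - x3 with hb3
      set b4 := c4 - x4 with hb4
      have hx1 : x1 = c1 - b1 := by omega
      have hy1 : y1 = c1 + b1 := by omega
      have hx2 : x2 = c2 - b2 := by omega
      have hy2 : y2 = c2 + b2 := by omega
      have hx3 : x3 = c3 - b3 := by omega
      have hy3 : y3 = c3 + b3 := by omega
      have hx4 : x4 = c4 - b4 := by omega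
      have hy4 : y4 = c4 + b4 := by omega
      have hdvd : (2:ℤ) ∣ (n:ℤ) := ⟨-((x1*x3+y1*y3-y1*x3+x1*y3)+(x2*x4+y2*y4-y2*x4+x2*y4)), by linarith⟩
      have hne : (n:ℤ) = 2*((n/2 : ℕ) : ℤ) := by omega
      set m := n/2 with hm
      have hmn : m < n := by omega
      have g1 : c1^2+b1^2+c2^2+b2^2 = (m:ℤ) := by
        have : 2*(c1^2+b1^2+c2^2+b2^2) = 2*((m:ℕ):ℤ) := by
          rw [← hne, ← h1, hx1, hy1, hx2, hy2]; ring
        linarith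
      have g2 : c3^2+b3^2+c4^2+b4^2 = (m:ℤ) := by
        have : 2*(c3^2+b3^2+c4^2+b4^2) = 2*((m:ℕ):ℤ) := by
          rw [← hne, ← h2, hx3, hy3, hx4, hy4]; ring
        linarith
      have g3 : (m:ℤ) + 2*((c1*c3+b1*b3-b1*c3+c1*b3)+(c2*c4+b2*b4-b2*c4+c2*b4)) = 0 := by
        have expand : 2*((m:ℤ) + 2*((c1*c3+b1*b3-b1*c3+c1*b3)+(c2*c4+b2*b4-b2*c4+c2*b4)))
            = (n:ℤ) + 2*((x1*x3+y1*y3-y1*x3+x1*y3)+(x2*x4+y2*y4-y2*x4+x2*y4)) := by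
          rw [hne, hx1, hy1, hx2, hy2, hx3, hy3, hx4, hy4]; ring
        rw [h3] at expand
        linarith
      obtain ⟨q1, q2, q3, q4, q5, q6, q7, q8⟩ := ih m hmn c1 b1 c2 b2 c3 b3 c4 b4 g1 g2 g3
      omega

lemma int_bound (a1 b1 a2 b2 a3 b3 a4 b4 : ℤ)
    (h : ¬ (a1 = 0 ∧ b1 = 0 ∧ a2 = 0 ∧ b2 = 0 ∧ a3 = 0 ∧ b3 = 0 ∧ a4 = 0 ∧ b4 = 0)) :
    7*((a3^2+b3^2+a4^2+b4^2) - (a1^2+b1^2+a2^2+b2^2))^2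
      + ((a3^2+b3^2+a4^2+b4^2) + (a1^2+b1^2+a2^2+b2^2)
         + 4*((a1*a3+b1*b3-b1*a3+a1*b3)+(a2*a4+b2*b4-b2*a4+a2*b4)))^2 ≥ 4 := by
  set M : ℤ := a3^2+b3^2+a4^2+b4^2 with hM
  set N : ℤ := a1^2+b1^2+a2^2+b2^2 with hN
  set K : ℤ := (a1*a3+b1*b3-b1*a3+a1*b3)+(a2*a4+b2*b4-b2*a4+a2*b4) with hK
  by_cases hd : M - N = 0
  · have ht : M + N + 4*K ≠ 0 := by
      intro h0
      have hMnn : 0 ≤ M := by positivity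
      have hMt : ((M.toNat : ℕ) : ℤ) = M := Int.toNat_of_nonneg hMnn
      have d1 : a1^2+b1^2+a2^2+b2^2 = ((M.toNat : ℕ) : ℤ) := by rw [hMt]; omega
      have d2 : a3^2+b3^2+a4^2+b4^2 = ((M.toNat : ℕ) : ℤ) := by rw [hMt]
      have d3 : ((M.toNat : ℕ) : ℤ)
          + 2*((a1*a3+b1*b3-b1*a3+a1*b3)+(a2*a4+b2*b4-b2*a4+a2*b4)) = 0 := by
        rw [hMt, ← hK]; omega
      obtain ⟨q1, q2, q3, q4, q5, q6, q7, q8⟩ :=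
        descent M.toNat a1 b1 a2 b2 a3 b3 a4 b4 d1 d2 d3
      exact h ⟨q1, q2, q3, q4, q5, q6, q7, q8⟩
    have heven : M + N + 4*K = 2*(M + 2*K) := by omega
    have hu : M + 2*K ≠ 0 := by omega
    have hu2 : (M + 2*K)^2 ≥ 1 := by
      rcases lt_or_gt_of_ne hu with h' | h' <;> nlinarith
    have : (M + N + 4*K)^2 = 4*(M + 2*K)^2 := by rw [heven]; ring
    rw [hd]; linarith
  · have : (M - N)^2 ≥ 1 := by
      rcases lt_or_gt_of_ne hd with h' | h' <;> nlinarith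
    nlinarith [sq_nonneg (M + N + 4*K)]

theorem stmt_12 :
    (∀ z₁ z₂ z₃ z₄ : ℂ,
      IsGaussianInt z₁ → IsGaussianInt z₂ → IsGaussianInt z₃ → IsGaussianInt z₄ →
      ¬ (z₁ = 0 ∧ z₂ = 0 ∧ z₃ = 0 ∧ z₄ = 0) →
      ‖Ddet z₁ z₂ z₃ z₄‖ ^ 2 ≥ 1 / 2) ∧
    (∃ z₁ z₂ z₃ z₄ : ℂ,
      IsGaussianInt z₁ ∧ IsGaussianInt z₂ ∧ IsGaussianInt z₃ ∧ IsGaussianInt z₄ ∧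
      ¬ (z₁ = 0 ∧ z₂ = 0 ∧ z₃ = 0 ∧ z₄ = 0) ∧
      ‖Ddet z₁ z₂ z₃ z₄‖ ^ 2 = 1 / 2) := by
  constructor
  · rintro z₁ z₂ z₃ z₄ ⟨a1, b1, rfl⟩ ⟨a2, b2, rfl⟩ ⟨a3, b3, rfl⟩ ⟨a4, b4, rfl⟩ h
    rw [Complex.sq_norm]
    have e : Ddet ((a1:ℂ) + (b1:ℂ)*Complex.I) ((a2:ℂ) + (b2:ℂ)*Complex.I)
        ((a3:ℂ) + (b3:ℂ)*Complex.I) ((a4:ℂ) + (b4:ℂ)*Complex.I)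
        = Ddet (((a1:ℝ):ℂ) + ((b1:ℝ):ℂ)*Complex.I) (((a2:ℝ):ℂ) + ((b2:ℝ):ℂ)*Complex.I)
          (((a3:ℝ):ℂ) + ((b3:ℝ):ℂ)*Complex.I) (((a4:ℝ):ℂ) + ((b4:ℝ):ℂ)*Complex.I) := by
      norm_cast
    rw [e, normSq_Ddet]
    have hint : 7*(((a3:ℤ)^2+b3^2+a4^2+b4^2) - (a1^2+b1^2+a2^2+b2^2))^2
        + ((a3^2+b3^2+a4^2+b4^2) + (a1^2+b1^2+a2^2+b2^2)
           + 4*((a1*a3+b1*b3-b1*a3+a1*b3)+(a2*a4+b2*b4-b2*a4+a2*b4)))^2 ≥ 4 := by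
      apply int_bound
      intro ⟨q1, q2, q3, q4, q5, q6, q7, q8⟩
      apply h
      subst q1; subst q2; subst q3; subst q4; subst q5; subst q6; subst q7; subst q8
      norm_num
    have hcast : ((7*(((a3:ℤ)^2+b3^2+a4^2+b4^2) - (a1^2+b1^2+a2^2+b2^2))^2
        + ((a3^2+b3^2+a4^2+b4^2) + (a1^2+b1^2+a2^2+b2^2)
           + 4*((a1*a3+b1*b3-b1*a3+a1*b3)+(a2*a4+b2*b4-b2*a4+a2*b4)))^2 : ℤ) : ℝ)
        = 7*((((a3:ℝ))^2+(b3:ℝ)^2+(a4:ℝ)^2+(b4:ℝ)^2) - ((a1:ℝ)^2+(b1:ℝ)^2+(a2:ℝ)^2+(b2:ℝ)^2))^2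
          + (((a3:ℝ)^2+(b3:ℝ)^2+(a4:ℝ)^2+(b4:ℝ)^2) + ((a1:ℝ)^2+(b1:ℝ)^2+(a2:ℝ)^2+(b2:ℝ)^2)
             + 4*(((a1:ℝ)*(a3:ℝ)+(b1:ℝ)*(b3:ℝ)-(b1:ℝ)*(a3:ℝ)+(a1:ℝ)*(b3:ℝ))
               +((a2:ℝ)*(a4:ℝ)+(b2:ℝ)*(b4:ℝ)-(b2:ℝ)*(a4:ℝ)+(a2:ℝ)*(b4:ℝ))))^2 := by
      push_cast
      ring
    have h4 : ((7*(((a3:ℤ)^2+b3^2+a4^2+b4^2) - (a1^2+b1^2+a2^2+b2^2))^2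
        + ((a3^2+b3^2+a4^2+b4^2) + (a1^2+b1^2+a2^2+b2^2)
           + 4*((a1*a3+b1*b3-b1*a3+a1*b3)+(a2*a4+b2*b4-b2*a4+a2*b4)))^2 : ℤ) : ℝ) ≥ 4 := by
      exact_mod_cast hint
    rw [hcast] at h4
    linarith
  · refine ⟨1, 0, 0, 1, ⟨1, 0, by norm_num⟩, ⟨0, 0, by norm_num⟩, ⟨0, 0, by norm_num⟩,
      ⟨1, 0, by norm_num⟩, fun hc => one_ne_zero hc.1, ?_⟩
    rw [Complex.sq_norm]
    have e : Ddet (1:ℂ) 0 0 1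
        = Ddet (((1:ℝ):ℂ) + ((0:ℝ):ℂ)*Complex.I) (((0:ℝ):ℂ) + ((0:ℝ):ℂ)*Complex.I)
          (((0:ℝ):ℂ) + ((0:ℝ):ℂ)*Complex.I) (((1:ℝ):ℂ) + ((0:ℝ):ℂ)*Complex.I) := by
      norm_num
    rw [e, normSq_Ddet]
    norm_num
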